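/- Let A be an m×n integer matrix with positive kernel lattice L = ker_Z(A) (i.e., L ∩ N^n = {0}). If u ∈ L admits a conformal decomposition u = v +_c w with v, w nonzero elements of L, then u^+ and u^- lie in the same connected component of the fiber graph G_u. Consequently, every element of the universal Markov basis of A belongs to the Graver basis of A. -/
import Mathlib


/-- Componentwise positive part of an integer vector. -/
def vpos {n : ℕ} (u : Fin n → ℤ) : Fin n → ℤ := fun i => max (u i) 0
/-- Componentwise negative part of an integer vector. -/
def vneg {n : ℕ} (u : Fin n → ℤ) : Fin n → ℤ := fun i => max (-u i) 0

/-- The fiber of `u` with respect to the kernel lattice of `A`. -/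
def fiber {m n : ℕ} (A : Matrix (Fin m) (Fin n) ℤ) (u : Fin n → ℤ) : Set (Fin n → ℤ) :=
  {t | (∀ i, 0 ≤ t i) ∧ A.mulVec (vpos u - t) = 0}

/-- The edge relation of the fiber graph `G_u`: two fiber elements are adjacent iff they share
a nonzero coordinate. -/
def fiberEdge {m n : ℕ} (A : Matrix (Fin m) (Fin n) ℤ) (u : Fin n → ℤ)
    (w₁ w₂ : Fin n → ℤ) : Prop :=
  w₁ ∈ fiber A u ∧ w₂ ∈ fiber A u ∧ ∃ i, w₁ i ≠ 0 ∧ w₂ i ≠ 0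

/-- `w₁` and `w₂` lie in the same connected component of `G_u`. -/
def sameComponent {m n : ℕ} (A : Matrix (Fin m) (Fin n) ℤ) (u : Fin n → ℤ)
    (w₁ w₂ : Fin n → ℤ) : Prop :=
  Relation.ReflTransGen (fiberEdge A u) w₁ w₂

/-- A nonzero kernel element of a positive lattice has a positive coordinate. -/
lemma exists_pos_coord {m n : ℕ} (A : Matrix (Fin m) (Fin n) ℤ)
    (hpos : ∀ x : Fin n → ℤ, A.mulVec x = 0 → (∀ i, 0 ≤ x i) → x = 0)
    {x : Fin n → ℤ} (hx : A.mulVec x = 0) (hxne : x ≠ 0) : ∃ i, 0 < x i := by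
  by_contra h
  push_neg at h
  have : A.mulVec (-x) = 0 := by rw [Matrix.mulVec_neg, hx, neg_zero]
  have := hpos (-x) this (fun i => by have := h i; simp; omega)
  apply hxne
  funext i
  have := congrFun this i
  simp at this ⊢
  omega

/-- A nonzero kernel element of a positive lattice has a negative coordinate. -/
lemma exists_neg_coord {m n : ℕ} (A : Matrix (Fin m) (Fin n) ℤ)
    (hpos : ∀ x : Fin n → ℤ, A.mulVec x = 0 → (∀ i, 0 ≤ x i) → x = 0)
    {x : Fin n → ℤ} (hx : A.mulVec x = 0) (hxne : x ≠ 0) : ∃ i, x i < 0 := by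
  by_contra h
  push_neg at h
  exact hxne (hpos x hx h)

/-- If the kernel lattice of `A` is positive and `u ∈ ker_ℤ(A)` has a conformal decomposition
into nonzero kernel elements, then `u⁺` and `u⁻` lie in the same connected component of `G_u`;
consequently, every element of the universal Markov basis of `A` (characterized by `u⁺` and `u⁻`
lying in different components of `G_u`) belongs to the Graver basis of `A`. -/
theorem conformal_implies_connected_and_markov_subset_graver
    {m n : ℕ} (A : Matrix (Fin m) (Fin n) ℤ)
    (hpos : ∀ x : Fin n → ℤ, A.mulVec x = 0 → (∀ i, 0 ≤ x i) → x = 0) :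
    (∀ u v w : Fin n → ℤ, A.mulVec u = 0 → A.mulVec v = 0 → A.mulVec w = 0 →
      v ≠ 0 → w ≠ 0 → u = v + w → vpos u = vpos v + vpos w → vneg u = vneg v + vneg w →
      sameComponent A u (vpos u) (vneg u)) ∧
    (∀ u : Fin n → ℤ, A.mulVec u = 0 → u ≠ 0 →
      ¬ sameComponent A u (vpos u) (vneg u) →
      -- u is in the Graver basis: no conformal decomposition into nonzero kernel elements
      ¬ ∃ v w : Fin n → ℤ, A.mulVec v = 0 ∧ A.mulVec w = 0 ∧ v ≠ 0 ∧ w ≠ 0 ∧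
        u = v + w ∧ vpos u = vpos v + vpos w ∧ vneg u = vneg v + vneg w) := by
  have main : ∀ u v w : Fin n → ℤ, A.mulVec u = 0 → A.mulVec v = 0 → A.mulVec w = 0 →
      v ≠ 0 → w ≠ 0 → u = v + w → vpos u = vpos v + vpos w → vneg u = vneg v + vneg w →
      sameComponent A u (vpos u) (vneg u) := by
    intro u v w hu hv hw hvne hwne huvw hp hn
    set t : Fin n → ℤ := vpos v + vneg w with ht
    have hposfib : vpos u ∈ fiber A u := by
      refine ⟨fun i => le_max_right _ _, ?_⟩
      simp
    have hnegfib : vneg u ∈ fiber A u := by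
      refine ⟨fun i => le_max_right _ _, ?_⟩
      have : vpos u - vneg u = u := by
        funext i; simp only [vpos, vneg, Pi.sub_apply]; omega
      rw [this, hu]
    have htfib : t ∈ fiber A u := by
      refine ⟨fun i => by simp [ht, vpos, vneg]; omega, ?_⟩
      have : vpos u - t = w := by
        funext i
        have hpi := congrFun hp i
        simp [ht, vpos, vneg] at hpi ⊢
        omega
      rw [this, hw]
    obtain ⟨i, hi⟩ := exists_pos_coord A hpos hv hvne
    obtain ⟨j, hj⟩ := exists_neg_coord A hpos hw hwne
    have e1 : fiberEdge A u (vpos u) t := by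
      refine ⟨hposfib, htfib, i, ?_, ?_⟩
      · have hpi := congrFun hp i
        simp [vpos, vneg] at hpi ⊢
        omega
      · simp [ht, vpos, vneg]
        omega
    have e2 : fiberEdge A u t (vneg u) := by
      refine ⟨htfib, hnegfib, j, ?_, ?_⟩
      · simp [ht, vpos, vneg]
        omega
      · have hnj := congrFun hn j
        simp [vpos, vneg] at hnj ⊢
        omega
    exact Relation.ReflTransGen.head e1 (Relation.ReflTransGen.head e2 .refl)
  refine ⟨main, ?_⟩
  rintro u hu _ hnot ⟨v, w, hv, hw, hvne, hwne, huvw, hp, hn⟩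
  exact hnot (main u v w hu hv hw hvne hwne huvw hp hn)
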